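/- Let λ be a weight of gl(p+q|r+s) of the form λ = (−λ₁^δ,…,−λ_q^δ | −λ₁^ε,…,−λ_s^ε | 0…0 | 0…0, λ_s^ε,…,λ₁^ε | λ_q^δ,…,λ₁^δ) in the ordered basis given by the δε-chain δ_{p+1}…δ_{p+q} ε_{r+1}…ε_{r+s} δ_{q+1}…δ_p ε_{s+1}…ε_{s+r} ε_s…ε_1 δ_q…δ_1. Then the bubble-sort chain of reflections R reversing this chain (with odd swaps acting by the odd-reflection rule) satisfies R(λ) = −λ. -/

import Mathlib

noncomputable section

/-- The basis weight `δ_i` (for `Sum.inl i`) resp. `ε_j` (for `Sum.inr j`), 0-based. -/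
def wtN (a : ℕ ⊕ ℕ) : (ℕ ⊕ ℕ) → ℝ := Pi.single a 1

/-- The invariant form with `⟨δ_i,δ_j⟩ = δ_{ij}` (`i,j < m`), `⟨ε_i,ε_j⟩ = −δ_{ij}`
(`i,j < n`), `⟨δ_i,ε_j⟩ = 0`. -/
def wformN (m n : ℕ) (v w : (ℕ ⊕ ℕ) → ℝ) : ℝ :=
  (∑ i ∈ Finset.range m, v (Sum.inl i) * w (Sum.inl i)) -
    ∑ j ∈ Finset.range n, v (Sum.inr j) * w (Sum.inr j)

/-- Even reflection at an anisotropic root. -/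
def evenReflN (m n : ℕ) (α μ : (ℕ ⊕ ℕ) → ℝ) : (ℕ ⊕ ℕ) → ℝ :=
  μ - (2 * wformN m n α μ / wformN m n α α) • α

/-- Odd reflection on weights: `r_α(λ) = λ` if `⟨λ,α⟩ = 0`, `λ − α` otherwise. -/
def oddReflN (m n : ℕ) (α μ : (ℕ ⊕ ℕ) → ℝ) : (ℕ ⊕ ℕ) → ℝ :=
  if wformN m n α μ = 0 then μ else μ - α

/-- The reflection attached to a swap of two symbols: even if of the same type,
odd otherwise. -/
def swapReflN (m n : ℕ) (a b : ℕ ⊕ ℕ) (μ : (ℕ ⊕ ℕ) → ℝ) : (ℕ ⊕ ℕ) → ℝ :=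
  if a.isLeft = b.isLeft then evenReflN m n (wtN a - wtN b) μ
  else oddReflN m n (wtN a - wtN b) μ

/-- The bubble-sort pattern of adjacent transpositions reversing positions `l,…,r`. -/
def bubblePat (l r : ℕ) (b : Bool) : List (ℕ × ℕ) :=
  if _h : l < r then
    if b then ((List.range (r - l)).map fun k => (l, l + k + 1)) ++ bubblePat (l + 1) r false
    else ((List.range (r - l)).map fun k => (r - 1 - k, r)) ++ bubblePat l (r - 1) true
  else []
termination_by r - l
decreasing_by all_goals omega

/-- The chain of reflections reversing the δε-chain `C` of full length `m+n`. -/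
def RPchainN (m n : ℕ) (C : ℕ → ℕ ⊕ ℕ) (μ : (ℕ ⊕ ℕ) → ℝ) : (ℕ ⊕ ℕ) → ℝ :=
  (bubblePat 0 (m + n - 1) true).foldl (fun ν p => swapReflN m n (C p.1) (C p.2) ν) μ

/-- The compatible δε-chain
`δ_{p+1}…δ_{p+q} ε_{r+1}…ε_{r+s} δ_{q+1}…δ_p ε_{s+1}…ε_r ε_s…ε_1 δ_q…δ_1`
of `gl(p+q|r+s)`, written 0-based. -/
def glChain (p q r s : ℕ) (k : ℕ) : ℕ ⊕ ℕ :=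
  if k < q then Sum.inl (p + k)
  else if k < q + s then Sum.inr (r + k - q)
  else if k < p + s then Sum.inl (k - s)
  else if k < p + r then Sum.inr (k - p)
  else if k < p + r + s then Sum.inr (p + r + s - 1 - k)
  else Sum.inl (p + q + r + s - 1 - k)

/-- The weight `λ = Σ_i λ_i^δ (δ_i − δ_{p+i}) + Σ_j λ_j^ε (ε_j − ε_{r+j})`, i.e. the
weight with coordinate vector
`(−λ^δ…|−λ^ε…|0…0|0…0, λ^ε reversed | λ^δ reversed)` along the above chain. -/
def lamVecN (p q r s : ℕ) (ld le : ℕ → ℝ) : (ℕ ⊕ ℕ) → ℝ :=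
  (∑ i ∈ Finset.range q, ld i • (wtN (Sum.inl i) - wtN (Sum.inl (p + i)))) +
    ∑ j ∈ Finset.range s, le j • (wtN (Sum.inr j) - wtN (Sum.inr (r + j)))

namespace S12

def sg : ℕ ⊕ ℕ → ℝ := Sum.elim (fun _ => 1) (fun _ => -1)

def inR (m n : ℕ) : ℕ ⊕ ℕ → Prop := Sum.elim (· < m) (· < n)

lemma hsum (M i : ℕ) (hi : i < M) (g : ℕ → ℝ) :
    (∑ x ∈ Finset.range M, (if x = i then (1:ℝ) else 0) * g x) = g i := by
  rw [Finset.sum_eq_single i]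
  · simp
  · intro b _ hb; simp [hb]
  · intro h; exact absurd (Finset.mem_range.mpr hi) h

lemma wtN_apply (a x : ℕ ⊕ ℕ) : wtN a x = if x = a then 1 else 0 := Pi.single_apply a 1 x

lemma wform_sub (m n : ℕ) (a b : ℕ ⊕ ℕ) (ha : inR m n a) (hb : inR m n b)
    (μ : (ℕ ⊕ ℕ) → ℝ) (hab : a ≠ b) :
    wformN m n (wtN a - wtN b) μ = sg a * μ a - sg b * μ b := by
  unfold wformN
  have key : ∀ x : ℕ ⊕ ℕ, (wtN a - wtN b) x = (if x = a then 1 else 0) - (if x = b then 1 else 0) := by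
    intro x; simp [wtN_apply]
  cases a with
  | inl i =>
    cases b with
    | inl j =>
      have hij : i ≠ j := fun h => hab (by rw [h])
      simp only [key, Sum.inl.injEq, Sum.inr.injEq, reduceCtorEq, if_false, sub_zero, zero_sub,
        sub_mul, neg_mul, sub_self]
      rw [Finset.sum_sub_distrib, hsum m i ha (fun x => μ (Sum.inl x)),
        hsum m j hb (fun x => μ (Sum.inl x))]
      simp [sg]
    | inr j =>
      simp only [key, Sum.inl.injEq, Sum.inr.injEq, reduceCtorEq, if_false, sub_zero, zero_sub,
        neg_mul]
      rw [hsum m i ha (fun x => μ (Sum.inl x))]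
      rw [Finset.sum_neg_distrib, hsum n j hb (fun x => μ (Sum.inr x))]
      simp [sg]
  | inr i =>
    cases b with
    | inl j =>
      simp only [key, Sum.inl.injEq, Sum.inr.injEq, reduceCtorEq, if_false, sub_zero, zero_sub,
        neg_mul]
      rw [Finset.sum_neg_distrib, hsum m j hb (fun x => μ (Sum.inl x)),
        hsum n i ha (fun x => μ (Sum.inr x))]
      simp [sg]; ring
    | inr j =>
      have hij : i ≠ j := fun h => hab (by rw [h])
      simp only [key, Sum.inl.injEq, Sum.inr.injEq, reduceCtorEq, if_false, sub_zero, zero_sub,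
        sub_mul, neg_mul, sub_self]
      rw [Finset.sum_sub_distrib, hsum n i ha (fun x => μ (Sum.inr x)),
        hsum n j hb (fun x => μ (Sum.inr x))]
      simp [sg]; ring

lemma step_even (m n : ℕ) (a b : ℕ ⊕ ℕ) (ha : inR m n a) (hb : inR m n b)
    (hab : a ≠ b) (hL : a.isLeft = b.isLeft) (μ : (ℕ ⊕ ℕ) → ℝ) :
    swapReflN m n a b μ = fun x => if x = a then μ b else if x = b then μ a else μ x := by
  unfold swapReflN evenReflN
  rw [if_pos hL, wform_sub m n a b ha hb μ hab, wform_sub m n a b ha hb _ hab]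
  have e1 : (wtN a - wtN b) a = 1 := by simp [wtN_apply, hab, Ne.symm hab]
  have e2 : (wtN a - wtN b) b = -1 := by simp [wtN_apply, hab, Ne.symm hab]
  rw [e1, e2]
  funext x
  have ex : wtN a x - wtN b x = (if x = a then 1 else 0) - (if x = b then 1 else 0) := by
    simp [wtN_apply]
  simp only [Pi.sub_apply, Pi.smul_apply, smul_eq_mul]
  rw [ex]
  cases a with
  | inl i =>
    cases b with
    | inl j =>
      simp only [sg, Sum.elim_inl]
      by_cases hxa : x = Sum.inl i <;> by_cases hxb : x = Sum.inl j <;>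
        simp [hxa, hxb, hab] at * <;> (try simp [hxa]) <;> ring_nf
    | inr j => simp at hL
  | inr i =>
    cases b with
    | inl j => simp at hL
    | inr j =>
      simp only [sg, Sum.elim_inr]
      by_cases hxa : x = Sum.inr i <;> by_cases hxb : x = Sum.inr j <;>
        simp [hxa, hxb, hab] at * <;> (try simp [hxa]) <;> ring_nf

lemma step_odd (m n : ℕ) (a b : ℕ ⊕ ℕ) (ha : inR m n a) (hb : inR m n b)
    (hL : a.isLeft ≠ b.isLeft) (μ : (ℕ ⊕ ℕ) → ℝ) :
    swapReflN m n a b μ = if μ a + μ b = 0 then μ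
      else fun x => if x = a then μ a - 1 else if x = b then μ b + 1 else μ x := by
  have hab : a ≠ b := fun h => hL (by rw [h])
  unfold swapReflN oddReflN
  rw [if_neg hL, wform_sub m n a b ha hb μ hab]
  have hcond : (sg a * μ a - sg b * μ b = 0) ↔ (μ a + μ b = 0) := by
    cases a with
    | inl i => cases b with
      | inl j => simp at hL
      | inr j => simp only [sg, Sum.elim_inl, Sum.elim_inr]; constructor <;> intro <;> linarith
    | inr i => cases b with
      | inl j => simp only [sg, Sum.elim_inl, Sum.elim_inr]; constructor <;> intro <;> linarith
      | inr j => simp at hL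
  by_cases hc : μ a + μ b = 0
  · rw [if_pos (hcond.mpr hc), if_pos hc]
  · rw [if_neg (fun h => hc (hcond.mp h)), if_neg hc]
    funext x
    have ex : wtN a x - wtN b x = (if x = a then 1 else 0) - (if x = b then 1 else 0) := by
      simp [wtN_apply]
    simp only [Pi.sub_apply]
    rw [ex]
    by_cases hxa : x = a <;> by_cases hxb : x = b <;> simp [hxa, hxb, hab] at * <;> (try simp [hxa]) <;> ring_nf

lemma step_untouched (m n : ℕ) (a b x : ℕ ⊕ ℕ) (μ : (ℕ ⊕ ℕ) → ℝ)
    (hxa : x ≠ a) (hxb : x ≠ b) : swapReflN m n a b μ x = μ x := by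
  have ex : (wtN a - wtN b) x = 0 := by simp [wtN_apply, hxa, hxb]
  unfold swapReflN evenReflN oddReflN
  split_ifs <;> simp [ex]

lemma step_zero (m n : ℕ) (a b : ℕ ⊕ ℕ) (μ : (ℕ ⊕ ℕ) → ℝ)
    (h1 : μ a = 0) (h2 : μ b = 0) : swapReflN m n a b μ = μ := by
  have hw : wformN m n (wtN a - wtN b) μ = 0 := by
    unfold wformN
    have t1 : ∀ x ∈ Finset.range m, (wtN a - wtN b) (Sum.inl x) * μ (Sum.inl x) = 0 := by
      intro x _
      by_cases hx1 : (Sum.inl x : ℕ ⊕ ℕ) = a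
      · rw [hx1, h1, mul_zero]
      · by_cases hx2 : (Sum.inl x : ℕ ⊕ ℕ) = b
        · rw [hx2, h2, mul_zero]
        · rw [show (wtN a - wtN b) (Sum.inl x) = 0 by simp [wtN_apply, hx1, hx2], zero_mul]
    have t2 : ∀ x ∈ Finset.range n, (wtN a - wtN b) (Sum.inr x) * μ (Sum.inr x) = 0 := by
      intro x _
      by_cases hx1 : (Sum.inr x : ℕ ⊕ ℕ) = a
      · rw [hx1, h1, mul_zero]
      · by_cases hx2 : (Sum.inr x : ℕ ⊕ ℕ) = b
        · rw [hx2, h2, mul_zero]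
        · rw [show (wtN a - wtN b) (Sum.inr x) = 0 by simp [wtN_apply, hx1, hx2], zero_mul]
    rw [Finset.sum_eq_zero t1, Finset.sum_eq_zero t2, sub_zero]
  unfold swapReflN evenReflN oddReflN
  split_ifs with h hc
  · simp [hw]
  · rfl
  all_goals exact absurd hw hc



lemma fold_untouched (m n : ℕ) (C : ℕ → ℕ ⊕ ℕ) (x : ℕ ⊕ ℕ) :
    ∀ (L : List (ℕ × ℕ)) (μ : (ℕ ⊕ ℕ) → ℝ),
    (∀ pr ∈ L, C pr.1 ≠ x ∧ C pr.2 ≠ x) →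
    List.foldl (fun ν pr => swapReflN m n (C pr.1) (C pr.2) ν) μ L x = μ x := by
  intro L
  induction L with
  | nil => intro μ _; rfl
  | cons hd tl ih =>
    intro μ h
    rw [List.foldl_cons, ih _ (fun pr hpr => h pr (List.mem_cons_of_mem hd hpr))]
    exact step_untouched m n _ _ x μ (Ne.symm (h hd List.mem_cons_self).1)
      (Ne.symm (h hd List.mem_cons_self).2)

lemma fold_zero (m n : ℕ) (C : ℕ → ℕ ⊕ ℕ) :
    ∀ (L : List (ℕ × ℕ)) (μ : (ℕ ⊕ ℕ) → ℝ),
    (∀ pr ∈ L, μ (C pr.1) = 0 ∧ μ (C pr.2) = 0) →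
    List.foldl (fun ν pr => swapReflN m n (C pr.1) (C pr.2) ν) μ L = μ := by
  intro L
  induction L with
  | nil => intro μ _; rfl
  | cons hd tl ih =>
    intro μ h
    rw [List.foldl_cons,
      step_zero m n _ _ μ (h hd List.mem_cons_self).1 (h hd List.mem_cons_self).2]
    exact ih μ (fun pr hpr => h pr (List.mem_cons_of_mem hd hpr))

/-- The two-pass lemma: forward pass `(l,k₁),…,(l,k_T),(l,r)` followed by backward pass
`(k_T,r),…,(k₁,r)` swaps the values at `C l` and `C r` and restores everything else. -/
lemma two_pass (m n : ℕ) (C : ℕ → ℕ ⊕ ℕ) (l r : ℕ) :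
    ∀ (ks : List ℕ) (μ : (ℕ ⊕ ℕ) → ℝ),
    inR m n (C l) → inR m n (C r) → (C l).isLeft = (C r).isLeft → C l ≠ C r →
    (∀ k ∈ ks, inR m n (C k) ∧ C k ≠ C l ∧ C k ≠ C r) →
    List.foldl (fun ν pr => swapReflN m n (C pr.1) (C pr.2) ν) μ
      ((ks.map fun k => (l, k)) ++ (l, r) :: (ks.reverse.map fun k => (k, r)))
      = fun x => if x = C l then μ (C r) else if x = C r then μ (C l) else μ x := by
  intro ks
  induction ks with
  | nil =>
    intro μ hl hr hL hlr _
    simp only [List.map_nil, List.reverse_nil, List.nil_append, List.foldl_cons, List.foldl_nil]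
    rw [step_even m n (C l) (C r) hl hr hlr hL μ]
  | cons k t ih =>
    intro μ hl hr hL hlr hk
    obtain ⟨hkR, hKA, hKB⟩ := hk k List.mem_cons_self
    have ht : ∀ k' ∈ t, inR m n (C k') ∧ C k' ≠ C l ∧ C k' ≠ C r :=
      fun k' hk' => hk k' (List.mem_cons_of_mem k hk')
    have hBA : C r ≠ C l := Ne.symm hlr
    have hAK : C l ≠ C k := Ne.symm hKA
    have hBK : C r ≠ C k := Ne.symm hKB
    have hlist : (((k :: t).map fun k => (l, k)) ++ (l, r) :: ((k :: t).reverse.map fun k => (k, r)))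
        = (l, k) :: (((t.map fun k => (l, k)) ++ (l, r) :: (t.reverse.map fun k => (k, r))) ++ [(k, r)]) := by
      simp
    rw [hlist, List.foldl_cons, List.foldl_append]
    by_cases hKL : (C k).isLeft = (C l).isLeft
    · -- even case
      rw [show swapReflN m n (C l) (C k) μ
            = fun x => if x = C l then μ (C k) else if x = C k then μ (C l) else μ x
          from step_even m n (C l) (C k) hl hkR hAK hKL.symm μ]
      rw [ih _ hl hr hL hlr ht]
      simp only [List.foldl_cons, List.foldl_nil]
      rw [step_even m n (C k) (C r) hkR hr hKB (hKL.trans hL) _]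
      funext x
      by_cases h1 : x = C k <;> by_cases h2 : x = C r <;> by_cases h3 : x = C l <;>
        simp only [h1, h2, h3, if_pos rfl, if_neg hKA, if_neg hKB, if_neg hBA, if_neg hAK,
          if_neg hBK, if_neg hlr] <;> simp [h1, h2, h3, hKA, hKB, hBA, hAK, hBK, hlr]
    · -- odd case
      have hKBL : (C k).isLeft ≠ (C r).isLeft := fun h => hKL (h.trans hL.symm)
      rw [step_odd m n (C l) (C k) hl hkR (fun h => hKL h.symm) μ]
      by_cases hc : μ (C l) + μ (C k) = 0
      · rw [if_pos hc, ih _ hl hr hL hlr ht]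
        simp only [List.foldl_cons, List.foldl_nil]
        rw [step_odd m n (C k) (C r) hkR hr hKBL _]
        rw [if_pos (by simp only [if_neg hKA, if_neg hKB, if_neg hBA, if_pos rfl, ite_true, if_true]; linarith)]
      · rw [if_neg hc, ih _ hl hr hL hlr ht]
        simp only [List.foldl_cons, List.foldl_nil]
        rw [step_odd m n (C k) (C r) hkR hr hKBL _]
        rw [if_neg (by
          simp only [if_neg hKA, if_neg hKB, if_neg hBA, if_pos rfl, ite_true, if_true]
          intro h; apply hc; linarith)]
        funext x
        by_cases h1 : x = C k <;> by_cases h2 : x = C r <;> by_cases h3 : x = C l <;>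
          simp only [h1, h2, h3, if_pos rfl, if_neg hKA, if_neg hKB, if_neg hBA, if_neg hAK,
            if_neg hBK, if_neg hlr] <;>
          simp [h1, h2, h3, hKA, hKB, hBA, hAK, hBK, hlr] <;> ring_nf

lemma bubble_mem : ∀ (d l r : ℕ) (b : Bool), r - l ≤ d →
    ∀ pr ∈ bubblePat l r b, l ≤ pr.1 ∧ pr.1 < pr.2 ∧ pr.2 ≤ r := by
  intro d
  induction d with
  | zero =>
    intro l r b h pr hpr
    rw [bubblePat] at hpr
    rw [dif_neg (by omega)] at hpr
    exact absurd hpr List.not_mem_nil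
  | succ d ih =>
    intro l r b h pr hpr
    rw [bubblePat] at hpr
    by_cases hlr : l < r
    · rw [dif_pos hlr] at hpr
      cases b with
      | true =>
        simp only [if_true] at hpr
        rcases List.mem_append.mp hpr with h1 | h1
        · obtain ⟨k, hk, hk2⟩ := List.mem_map.mp h1
          rw [List.mem_range] at hk
          rw [← hk2]; simp; omega
        · have := ih (l+1) r false (by omega) pr h1
          omega
      | false =>
        simp only [if_false, Bool.false_eq_true] at hpr
        rcases List.mem_append.mp hpr with h1 | h1
        · obtain ⟨k, hk, hk2⟩ := List.mem_map.mp h1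
          rw [List.mem_range] at hk
          rw [← hk2]; simp; omega
        · have := ih l (r-1) true (by omega) pr h1
          omega
    · rw [dif_neg hlr] at hpr
      exact absurd hpr List.not_mem_nil

lemma bubble_decomp (l r : ℕ) (h : l < r) :
    bubblePat l r true = ((List.range' (l+1) (r-l-1)).map fun k => (l, k)) ++ (l, r) ::
      (((List.range' (l+1) (r-l-1)).reverse.map fun k => (k, r)) ++ bubblePat (l+1) (r-1) true) := by
  rw [bubblePat, dif_pos h, if_pos rfl]
  have hfwd : ((List.range (r - l)).map fun k => (l, l + k + 1))
      = ((List.range' (l+1) (r-l-1)).map fun k => (l, k)) ++ [(l, r)] := by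
    have : (List.range' (l+1) (r-l-1)).map (fun k => ((l, k) : ℕ × ℕ)) ++ [(l, r)]
        = (List.range' (l+1) (r-l)).map fun k => (l, k) := by
      have h2 : r - l = (r - l - 1) + 1 := by omega
      rw [h2, List.range'_concat]
      have h3 : l + 1 + 1 * (r - l - 1) = r := by omega
      rw [h3, show r - l - 1 + 1 - 1 = r - l - 1 from by omega]
      simp
    rw [this, List.range'_eq_map_range, List.map_map]
    apply List.map_congr_left
    intro k _
    simp [Function.comp]
    omega
  rw [hfwd]
  by_cases h2 : l + 1 < r
  · rw [bubblePat, dif_pos h2, if_neg (by simp)]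
    have hbwd : ((List.range (r - (l+1))).map fun k => (r - 1 - k, r))
        = (List.range' (l+1) (r-l-1)).reverse.map fun k => (k, r) := by
      rw [List.reverse_range', List.map_map]
      apply List.map_congr_left
      intro k hk
      rw [List.mem_range] at hk
      simp [Function.comp]
      omega
    rw [hbwd]
    simp
  · have hr : r = l + 1 := by omega
    subst hr
    rw [show bubblePat (l+1) (l+1) false = [] from by rw [bubblePat, dif_neg (by omega)]]
    rw [show bubblePat (l+1) (l+1-1) true = [] from by rw [bubblePat, dif_neg (by omega)]]
    simp [show l + 1 - l - 1 = 0 from by omega]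


section GLpart
variable (p q r s : ℕ)

lemma gc1 (k : ℕ) (h : k < q) : glChain p q r s k = Sum.inl (p + k) := by
  unfold glChain; rw [if_pos h]
lemma gc2 (k : ℕ) (h1 : q ≤ k) (h2 : k < q + s) :
    glChain p q r s k = Sum.inr (r + k - q) := by
  unfold glChain; rw [if_neg (by omega), if_pos h2]
lemma gc3 (k : ℕ) (h1 : q + s ≤ k) (h2 : k < p + s) :
    glChain p q r s k = Sum.inl (k - s) := by
  unfold glChain; rw [if_neg (by omega), if_neg (by omega), if_pos h2]
lemma gc4 (k : ℕ) (h1 : p + s ≤ k) (h2 : k < p + r) (hq : q ≤ p) :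
    glChain p q r s k = Sum.inr (k - p) := by
  unfold glChain; rw [if_neg (by omega), if_neg (by omega), if_neg (by omega), if_pos h2]
lemma gc5 (k : ℕ) (h1 : p + r ≤ k) (h2 : k < p + r + s) (hq : q ≤ p) (hs : s ≤ r) :
    glChain p q r s k = Sum.inr (p + r + s - 1 - k) := by
  unfold glChain
  rw [if_neg (by omega), if_neg (by omega), if_neg (by omega), if_neg (by omega), if_pos h2]
lemma gc6 (k : ℕ) (h1 : p + r + s ≤ k) (hq : q ≤ p) (hs : s ≤ r) :
    glChain p q r s k = Sum.inl (p + q + r + s - 1 - k) := by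
  unfold glChain
  rw [if_neg (by omega), if_neg (by omega), if_neg (by omega), if_neg (by omega), if_neg (by omega)]

lemma gc_inR (hq : q ≤ p) (hs : s ≤ r) (k : ℕ) (hk : k < p + q + r + s) :
    inR (p + q) (r + s) (glChain p q r s k) := by
  unfold inR
  rcases Nat.lt_or_ge k q with h | h
  · rw [gc1 p q r s k h]; simp; omega
  · rcases Nat.lt_or_ge k (q + s) with h2 | h2
    · rw [gc2 p q r s k h h2]; simp; omega
    · rcases Nat.lt_or_ge k (p + s) with h3 | h3
      · rw [gc3 p q r s k h2 h3]; simp; omega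
      · rcases Nat.lt_or_ge k (p + r) with h4 | h4
        · rw [gc4 p q r s k h3 h4 hq]; simp; omega
        · rcases Nat.lt_or_ge k (p + r + s) with h5 | h5
          · rw [gc5 p q r s k h4 h5 hq hs]; simp; omega
          · rw [gc6 p q r s k h5 hq hs]; simp; omega

lemma gc_inj (hq : q ≤ p) (hs : s ≤ r) (k1 k2 : ℕ) (h1 : k1 < p + q + r + s)
    (h2 : k2 < p + q + r + s) (h : glChain p q r s k1 = glChain p q r s k2) : k1 = k2 := by
  unfold glChain at h
  split_ifs at h <;> simp only [Sum.inl.injEq, Sum.inr.injEq] at h <;> omega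

lemma gc_isLeft_mirror (hq : q ≤ p) (hs : s ≤ r) (l rr : ℕ) (hl : l < q + s)
    (hsum : l + rr + 1 = p + q + r + s) :
    (glChain p q r s l).isLeft = (glChain p q r s rr).isLeft := by
  rcases Nat.lt_or_ge l q with h | h
  · rw [gc1 p q r s l h, gc6 p q r s rr (by omega) hq hs]; rfl
  · rw [gc2 p q r s l h hl, gc5 p q r s rr (by omega) (by omega) hq hs]; rfl

lemma hsum2 (Q : ℕ) (f : ℕ → ℝ) (i c : ℕ) :
    (∑ x ∈ Finset.range Q, f x * (if i = c + x then (1:ℝ) else 0))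
      = if c ≤ i ∧ i < c + Q then f (i - c) else 0 := by
  by_cases h : c ≤ i ∧ i < c + Q
  · rw [if_pos h, Finset.sum_eq_single (i - c)]
    · rw [if_pos (by omega), mul_one]
    · intro b _ hb
      rw [if_neg (by omega), mul_zero]
    · intro hn; exact absurd (Finset.mem_range.mpr (by omega)) hn
  · rw [if_neg h, Finset.sum_eq_zero]
    intro b hb
    rw [Finset.mem_range] at hb
    rw [if_neg (by omega), mul_zero]

lemma lamL (ld le : ℕ → ℝ) (i : ℕ) :
    lamVecN p q r s ld le (Sum.inl i)
      = (if i < q then ld i else 0) - (if p ≤ i ∧ i < p + q then ld (i - p) else 0) := by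
  unfold lamVecN
  simp only [Pi.add_apply, Finset.sum_apply, Pi.smul_apply, Pi.sub_apply, smul_eq_mul,
    wtN_apply, Sum.inl.injEq, Sum.inr.injEq, reduceCtorEq, if_false, sub_zero, sub_self,
    mul_zero, Finset.sum_const_zero, add_zero]
  simp only [mul_sub]
  rw [Finset.sum_sub_distrib]
  congr 1
  · have := hsum2 q ld i 0
    simp only [Nat.zero_add, zero_add] at this
    rw [this]
    by_cases h : i < q
    · rw [if_pos h, if_pos (by omega)]; simp
    · rw [if_neg h, if_neg (by omega)]
  · exact hsum2 q ld i p

lemma lamR (ld le : ℕ → ℝ) (j : ℕ) :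
    lamVecN p q r s ld le (Sum.inr j)
      = (if j < s then le j else 0) - (if r ≤ j ∧ j < r + s then le (j - r) else 0) := by
  unfold lamVecN
  simp only [Pi.add_apply, Finset.sum_apply, Pi.smul_apply, Pi.sub_apply, smul_eq_mul,
    wtN_apply, Sum.inl.injEq, Sum.inr.injEq, reduceCtorEq, if_false, sub_zero, sub_self,
    mul_zero, Finset.sum_const_zero, zero_add]
  simp only [mul_sub]
  rw [Finset.sum_sub_distrib]
  congr 1
  · have := hsum2 s le j 0
    simp only [Nat.zero_add, zero_add] at this
    rw [this]
    by_cases h : j < s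
    · rw [if_pos h, if_pos (by omega)]; simp
    · rw [if_neg h, if_neg (by omega)]
  · exact hsum2 s le j r


lemma lam_mid_zero (hq : q ≤ p) (hs : s ≤ r) (ld le : ℕ → ℝ) (k : ℕ)
    (h1 : q + s ≤ k) (h2 : k < p + r) :
    lamVecN p q r s ld le (glChain p q r s k) = 0 := by
  rcases Nat.lt_or_ge k (p + s) with h | h
  · rw [gc3 p q r s k h1 h, lamL]
    rw [if_neg (by omega), if_neg (by omega), sub_zero]
  · rw [gc4 p q r s k h h2 hq, lamR]
    rw [if_neg (by omega), if_neg (by omega), sub_zero]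

lemma lam_mirror (hq : q ≤ p) (hs : s ≤ r) (ld le : ℕ → ℝ) (l rr : ℕ)
    (hl : l < q + s) (hsum : l + rr + 1 = p + q + r + s) :
    lamVecN p q r s ld le (glChain p q r s rr)
      = - lamVecN p q r s ld le (glChain p q r s l) := by
  rcases Nat.lt_or_ge l q with h | h
  · rw [gc1 p q r s l h, gc6 p q r s rr (by omega) hq hs,
      show p + q + r + s - 1 - rr = l from by omega, lamL, lamL]
    rw [if_pos h, if_neg (by omega), if_neg (by omega), if_pos (by omega)]
    simp
  · rw [gc2 p q r s l h hl, gc5 p q r s rr (by omega) (by omega) hq hs,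
      show p + r + s - 1 - rr = l - q from by omega, lamR, lamR]
    rw [if_pos (by omega), if_neg (by omega), if_neg (by omega), if_pos (by omega),
      show r + l - q - r = l - q from by omega]
    simp

lemma lam_offchain (hq : q ≤ p) (hs : s ≤ r) (ld le : ℕ → ℝ) (x : ℕ ⊕ ℕ)
    (hx : ∀ k, k < p + q + r + s → glChain p q r s k ≠ x) :
    lamVecN p q r s ld le x = 0 := by
  cases x with
  | inl i =>
    rcases Nat.lt_or_ge i (p + q) with h | h
    · exfalso
      rcases Nat.lt_or_ge i q with h1 | h1
      · exact hx (p + q + r + s - 1 - i) (by omega)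
          (by rw [gc6 p q r s _ (by omega) hq hs]; congr 1; omega)
      · rcases Nat.lt_or_ge i p with h2 | h2
        · exact hx (i + s) (by omega)
            (by rw [gc3 p q r s _ (by omega) (by omega)]; congr 1; omega)
        · exact hx (i - p) (by omega)
            (by rw [gc1 p q r s _ (by omega)]; congr 1; omega)
    · rw [lamL, if_neg (by omega), if_neg (by omega), sub_zero]
  | inr j =>
    rcases Nat.lt_or_ge j (r + s) with h | h
    · exfalso
      rcases Nat.lt_or_ge j s with h1 | h1
      · exact hx (p + r + s - 1 - j) (by omega)
          (by rw [gc5 p q r s _ (by omega) (by omega) hq hs]; congr 1; omega)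
      · rcases Nat.lt_or_ge j r with h2 | h2
        · exact hx (j + p) (by omega)
            (by rw [gc4 p q r s _ (by omega) (by omega) hq]; congr 1; omega)
        · exact hx (j - r + q) (by omega)
            (by rw [gc2 p q r s _ (by omega) (by omega)]; congr 1; omega)
    · rw [lamR, if_neg (by omega), if_neg (by omega), sub_zero]

lemma main_ind (hq : q ≤ p) (hs : s ≤ r) (ld le : ℕ → ℝ) :
    ∀ (d l rr : ℕ), rr - l ≤ d → l ≤ rr → l + rr + 1 = p + q + r + s →
    ∀ μ : (ℕ ⊕ ℕ) → ℝ,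
    (∀ k, l ≤ k → k ≤ rr → μ (glChain p q r s k) = lamVecN p q r s ld le (glChain p q r s k)) →
    (∀ k, l ≤ k → k ≤ rr →
      (List.foldl (fun ν pr => swapReflN (p+q) (r+s) (glChain p q r s pr.1) (glChain p q r s pr.2) ν)
        μ (bubblePat l rr true)) (glChain p q r s k) = - μ (glChain p q r s k)) ∧
    (∀ x : ℕ ⊕ ℕ, (∀ k, l ≤ k → k ≤ rr → glChain p q r s k ≠ x) →
      (List.foldl (fun ν pr => swapReflN (p+q) (r+s) (glChain p q r s pr.1) (glChain p q r s pr.2) ν)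
        μ (bubblePat l rr true)) x = μ x) := by
  intro d
  induction d with
  | zero =>
    intro l rr hd hle hsum μ hμ
    have hrl : rr = l := by omega
    subst hrl
    rw [show bubblePat rr rr true = [] from by rw [bubblePat, dif_neg (by omega)]]
    simp only [List.foldl_nil]
    constructor
    · intro k hk1 hk2
      have hk : k = rr := by omega
      subst hk
      rw [hμ k le_rfl le_rfl, lam_mid_zero p q r s hq hs ld le k (by omega) (by omega)]
      simp
    · intro x _
      first | rfl | trivial
  | succ d ih =>
    intro l rr hd hle hsum μ hμ
    rcases Nat.eq_or_lt_of_le hle with hrl | hlr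
    · subst hrl
      rw [show bubblePat l l true = [] from by rw [bubblePat, dif_neg (by omega)]]
      simp only [List.foldl_nil]
      constructor
      · intro k hk1 hk2
        have hk : k = l := by omega
        subst hk
        rw [hμ k le_rfl le_rfl, lam_mid_zero p q r s hq hs ld le k (by omega) (by omega)]
        simp
      · intro x _
        first | rfl | trivial
    · -- l < rr
      have hN : p + q + r + s = l + rr + 1 := hsum.symm
      rcases Nat.lt_or_ge l (q + s) with hls | hls
      · -- two-pass case
        rw [bubble_decomp l rr hlr]
        rw [show ((List.range' (l+1) (rr-l-1)).map fun k => (l, k)) ++ (l, rr) ::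
              (((List.range' (l+1) (rr-l-1)).reverse.map fun k => (k, rr)) ++ bubblePat (l+1) (rr-1) true)
            = (((List.range' (l+1) (rr-l-1)).map fun k => (l, k)) ++ (l, rr) ::
              ((List.range' (l+1) (rr-l-1)).reverse.map fun k => (k, rr))) ++ bubblePat (l+1) (rr-1) true
          from by simp]
        rw [List.foldl_append]
        have hCne : ∀ k1 k2, k1 < p+q+r+s → k2 < p+q+r+s → k1 ≠ k2 →
            glChain p q r s k1 ≠ glChain p q r s k2 :=
          fun k1 k2 h1 h2 hne he => hne (gc_inj p q r s hq hs k1 k2 h1 h2 he)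
        rw [two_pass (p+q) (r+s) (glChain p q r s) l rr (List.range' (l+1) (rr-l-1)) μ
          (gc_inR p q r s hq hs l (by omega)) (gc_inR p q r s hq hs rr (by omega))
          (gc_isLeft_mirror p q r s hq hs l rr hls hsum)
          (hCne l rr (by omega) (by omega) (by omega))
          (by
            intro k hk
            rw [List.mem_range'_1] at hk
            exact ⟨gc_inR p q r s hq hs k (by omega),
              hCne k l (by omega) (by omega) (by omega),
              hCne k rr (by omega) (by omega) (by omega)⟩)]
        set μ₂ := fun x => if x = glChain p q r s l then μ (glChain p q r s rr)
          else if x = glChain p q r s rr then μ (glChain p q r s l) else μ x with hμ₂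
        have hμ₂l : μ₂ (glChain p q r s l) = μ (glChain p q r s rr) := by
          rw [hμ₂]; exact if_pos rfl
        have hμ₂r : μ₂ (glChain p q r s rr) = μ (glChain p q r s l) := by
          rw [hμ₂]
          exact (if_neg (hCne rr l (by omega) (by omega) (by omega))).trans (if_pos rfl)
        have hμ₂k : ∀ k, k < p+q+r+s → k ≠ l → k ≠ rr → μ₂ (glChain p q r s k) = μ (glChain p q r s k) := by
          intro k h1 h2 h3
          rw [hμ₂]
          exact (if_neg (hCne k l h1 (by omega) h2)).trans (if_neg (hCne k rr h1 (by omega) h3))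
        have hμ₂x : ∀ x, glChain p q r s l ≠ x → glChain p q r s rr ≠ x → μ₂ x = μ x := by
          intro x h1 h2
          rw [hμ₂]
          exact (if_neg (Ne.symm h1)).trans (if_neg (Ne.symm h2))
        have hmirror := lam_mirror p q r s hq hs ld le l rr hls hsum
        rcases Nat.lt_or_ge (l+1) rr with hlr2 | hlr2
        · -- interior nonempty: apply ih
          have hIH := ih (l+1) (rr-1) (by omega) (by omega) (by omega) μ₂
            (by
              intro k hk1 hk2
              rw [hμ₂k k (by omega) (by omega) (by omega)]
              exact hμ k (by omega) (by omega))
          constructor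
          · intro k hk1 hk2
            rcases Nat.lt_or_ge k (l+1) with hkl | hkl
            · have hkeq : k = l := by omega
              rw [hkeq, hIH.2 (glChain p q r s l)
                (fun k' h1 h2 => hCne k' l (by omega) (by omega) (by omega)), hμ₂l,
                hμ l le_rfl (by omega), hμ rr (by omega) le_rfl, hmirror]
            · rcases Nat.lt_or_ge (rr-1) k with hkr | hkr
              · have hkeq : k = rr := by omega
                rw [hkeq, hIH.2 (glChain p q r s rr)
                  (fun k' h1 h2 => hCne k' rr (by omega) (by omega) (by omega)), hμ₂r,
                  hμ rr (by omega) le_rfl, hμ l (by omega) (by omega)]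
                rw [show lamVecN p q r s ld le (glChain p q r s l)
                    = - lamVecN p q r s ld le (glChain p q r s rr) from by rw [hmirror]; ring]
              · rw [hIH.1 k hkl hkr, hμ₂k k (by omega) (by omega) (by omega)]
          · intro x hx
            rw [hIH.2 x (fun k' h1 h2 => hx k' (by omega) (by omega)),
              hμ₂x x (hx l le_rfl (by omega)) (hx rr (by omega) le_rfl)]
        · -- interior empty : rr = l+1
          have hrr : rr = l + 1 := by omega
          rw [show bubblePat (l+1) (rr-1) true = [] from by rw [bubblePat, dif_neg (by omega)]]
          simp only [List.foldl_nil]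
          constructor
          · intro k hk1 hk2
            rcases Nat.eq_or_lt_of_le hk1 with hkeq | hkgt
            · rw [← hkeq, hμ₂l, hμ l le_rfl (by omega), hμ rr (by omega) le_rfl, hmirror]
            · have hkeq : k = rr := by omega
              rw [hkeq, hμ₂r, hμ rr (by omega) le_rfl, hμ l (by omega) (by omega)]
              rw [show lamVecN p q r s ld le (glChain p q r s l)
                  = - lamVecN p q r s ld le (glChain p q r s rr) from by rw [hmirror]; ring]
          · intro x hx
            exact hμ₂x x (hx l le_rfl (by omega)) (hx rr (by omega) le_rfl)
      · -- zero window case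
        rw [fold_zero (p+q) (r+s) (glChain p q r s) (bubblePat l rr true) μ
          (by
            intro pr hpr
            have hb := bubble_mem (rr - l) l rr true le_rfl pr hpr
            constructor
            · rw [hμ pr.1 (by omega) (by omega)]
              exact lam_mid_zero p q r s hq hs ld le pr.1 (by omega) (by omega)
            · rw [hμ pr.2 (by omega) (by omega)]
              exact lam_mid_zero p q r s hq hs ld le pr.2 (by omega) (by omega))]
        constructor
        · intro k hk1 hk2
          rw [hμ k hk1 hk2, lam_mid_zero p q r s hq hs ld le k (by omega) (by omega)]
          simp
        · intro x _
          first | rfl | trivial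


end GLpart
end S12

/-- the bubble-sort chain of (even and odd) reflections reversing the
compatible δε-chain of `gl(p+q|r+s)` sends every weight of the displayed form to its
negative: `R(λ) = −λ`. -/
theorem stmt12 (p q r s : ℕ) (hpq : q ≤ p) (hrs : s ≤ r) (ld le : ℕ → ℝ) :
    RPchainN (p + q) (r + s) (glChain p q r s) (lamVecN p q r s ld le) =
      -lamVecN p q r s ld le := by

  unfold RPchainN
  by_cases hN : p + q + r + s = 0
  · have hlam : lamVecN p q r s ld le = 0 := by
      funext x
      cases x with
      | inl i => rw [S12.lamL, if_neg (by omega), if_neg (by omega)]; simp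
      | inr j => rw [S12.lamR, if_neg (by omega), if_neg (by omega)]; simp
    rw [show p + q + (r + s) - 1 = 0 from by omega,
      show bubblePat 0 0 true = [] from by rw [bubblePat, dif_neg (by omega)]]
    simp [hlam]
  · rw [show p + q + (r + s) - 1 = p + q + r + s - 1 from by omega]
    obtain ⟨H1, H2⟩ := S12.main_ind p q r s hpq hrs ld le (p+q+r+s-1) 0 (p+q+r+s-1)
      le_rfl (by omega) (by omega) (lamVecN p q r s ld le) (fun k _ _ => rfl)
    funext x
    by_cases hx : ∃ k, k ≤ p+q+r+s-1 ∧ glChain p q r s k = x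
    · obtain ⟨k, hk, hCk⟩ := hx
      rw [← hCk, H1 k (Nat.zero_le k) hk]
      simp
    · push_neg at hx
      rw [H2 x (fun k _ hk2 => hx k hk2)]
      have h0 : lamVecN p q r s ld le x = 0 :=
        S12.lam_offchain p q r s hpq hrs ld le x (fun k hk => hx k (by omega))
      simp [h0]
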